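/- A function F : [0,∞)^I → [0,∞) is a quasi-pseudometric aggregation function on products if and only if F is isotone, subadditive (F(x + y) ≤ F(x) + F(y) for all x, y), and F((0)_i) = 0; equivalently, F preserves asymmetric triangle triplets and F((0)_i) = 0. -/

import Mathlib

open NNReal

/-- A quasi-pseudometric on `X`, with values in `[0,∞)` (modelled by `ℝ≥0`):
`d x x = 0` and the triangle inequality. -/
def IsQPMetric {X : Type*} (d : X → X → ℝ≥0) : Prop :=
  (∀ x, d x x = 0) ∧ ∀ x y z, d x z ≤ d x y + d y z

/-- Auxiliary metric on `Fin 3` realizing an asymmetric triangle triplet. -/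
def dTrip (a b c : ℝ≥0) : Fin 3 → Fin 3 → ℝ≥0 := fun p q =>
  if p = q then 0 else
  if p = 0 ∧ q = 1 then a else
  if p = 1 ∧ q = 2 then b else
  if p = 0 ∧ q = 2 then c else a + b + c

lemma dTrip_qpm {a b c : ℝ≥0} (h : c ≤ a + b) : IsQPMetric (dTrip a b c) := by
  constructor
  · intro x; simp [dTrip]
  · intro x y z
    fin_cases x <;> fin_cases y <;> fin_cases z <;> simp [dTrip] <;>
      · rw [← NNReal.coe_le_coe]
        have h' := NNReal.coe_le_coe.mpr h
        push_cast at h' ⊢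
        have := a.coe_nonneg; have := b.coe_nonneg; have := c.coe_nonneg
        linarith

/-- `F : [0,∞)^I → [0,∞)` is a quasi-pseudometric aggregation function on
products iff `F` is isotone, subadditive and `F 0 = 0`; equivalently, iff `F`
preserves asymmetric triangle triplets and `F 0 = 0`. -/
theorem stmt12 {I : Type*} (F : (I → ℝ≥0) → ℝ≥0) :
    ((∀ (X : I → Type) (d : ∀ i, X i → X i → ℝ≥0),
        (∀ i, IsQPMetric (d i)) →
          IsQPMetric (fun x y : ∀ i, X i => F (fun i => d i (x i) (y i)))) ↔
      (Monotone F ∧ (∀ x y, F (x + y) ≤ F x + F y) ∧ F 0 = 0)) ∧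
    ((∀ (X : I → Type) (d : ∀ i, X i → X i → ℝ≥0),
        (∀ i, IsQPMetric (d i)) →
          IsQPMetric (fun x y : ∀ i, X i => F (fun i => d i (x i) (y i)))) ↔
      ((∀ a b c : I → ℝ≥0, c ≤ a + b → F c ≤ F a + F b) ∧ F 0 = 0)) := by
  -- P → T
  have hPT : (∀ (X : I → Type) (d : ∀ i, X i → X i → ℝ≥0),
        (∀ i, IsQPMetric (d i)) →
          IsQPMetric (fun x y : ∀ i, X i => F (fun i => d i (x i) (y i)))) →
      ((∀ a b c : I → ℝ≥0, c ≤ a + b → F c ≤ F a + F b) ∧ F 0 = 0) := by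
    intro h
    constructor
    · intro a b c hc
      have := h (fun _ => Fin 3) (fun i => dTrip (a i) (b i) (c i))
        (fun i => dTrip_qpm (by exact hc i))
      have ht := this.2 (fun _ => 0) (fun _ => 1) (fun _ => 2)
      simpa [dTrip] using ht
    · have := h (fun _ => Unit) (fun _ _ _ => 0) (fun i => ⟨fun _ => rfl, by simp⟩)
      have := this.1 (fun _ => ())
      simpa [Pi.zero_def] using this
  -- T → M
  have hTM : ((∀ a b c : I → ℝ≥0, c ≤ a + b → F c ≤ F a + F b) ∧ F 0 = 0) →
      (Monotone F ∧ (∀ x y, F (x + y) ≤ F x + F y) ∧ F 0 = 0) := by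
    rintro ⟨hT, h0⟩
    refine ⟨fun x y hxy => ?_, fun x y => hT x y (x + y) le_rfl, h0⟩
    have := hT y 0 x (by simpa using hxy)
    simpa [h0] using this
  -- M → P
  have hMP : (Monotone F ∧ (∀ x y, F (x + y) ≤ F x + F y) ∧ F 0 = 0) →
      (∀ (X : I → Type) (d : ∀ i, X i → X i → ℝ≥0),
        (∀ i, IsQPMetric (d i)) →
          IsQPMetric (fun x y : ∀ i, X i => F (fun i => d i (x i) (y i)))) := by
    rintro ⟨hm, hs, h0⟩ X d hd
    constructor
    · intro x
      have : (fun i => d i (x i) (x i)) = (0 : I → ℝ≥0) := by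
        funext i; exact (hd i).1 (x i)
      simp [this, h0]
    · intro x y z
      calc F (fun i => d i (x i) (z i))
          ≤ F ((fun i => d i (x i) (y i)) + fun i => d i (y i) (z i)) :=
            hm (fun i => (hd i).2 (x i) (y i) (z i))
        _ ≤ _ := hs _ _
  constructor
  · exact ⟨fun h => hTM (hPT h), fun h => hMP h⟩
  · exact ⟨hPT, fun h => hMP (hTM h)⟩
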